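/- There exists a positive integer m_0 such that for every integer m ≥ m_0 there exists a bipartite graph between a left vertex set A of size 4m and a right vertex set B of size 2m in which every left vertex has at most 5 distinct neighbors in B, and every subset S ⊆ A with |S| ≤ m has at least |S| distinct neighbors in B (and hence, by Hall's theorem, a matching of S into B saturating S). -/

import Mathlib

open Finset Nat

namespace QFH

lemma fs2 (a : ℕ) : (a+2)! = (a+2)*((a+1)*a !) := by
  rw [show a+2 = (a+1)+1 from rfl, factorial_succ, factorial_succ]
lemma fs3 (a : ℕ) : (a+3)! = (a+3)*((a+2)*((a+1)*a !)) := by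
  rw [show a+3 = (a+2)+1 from rfl, factorial_succ, fs2]
lemma fs4 (a : ℕ) : (a+4)! = (a+4)*((a+3)*((a+2)*((a+1)*a !))) := by
  rw [show a+4 = (a+3)+1 from rfl, factorial_succ, fs3]
lemma fs5 (a : ℕ) : (a+5)! = (a+5)*((a+4)*((a+3)*((a+2)*((a+1)*a !)))) := by
  rw [show a+5 = (a+4)+1 from rfl, factorial_succ, fs4]
lemma fs6 (a : ℕ) : (a+6)! = (a+6)*((a+5)*((a+4)*((a+3)*((a+2)*((a+1)*a !))))) := by
  rw [show a+6 = (a+5)+1 from rfl, factorial_succ, fs5]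

def Lm (m : ℕ) : ℕ := 9 ^ m * (2*m)! * ((2*m-2)!)^5 * ((3*m)!)^4
def Rm (m : ℕ) : ℕ := 5 ^ m * m ! * (m-1)! * ((m-2)!)^5 * (m+1)! * ((4*m)!)^4

lemma step_poly (k : ℕ) :
    9*(2*k+9)*(2*k+10)*((2*k+8)*(2*k+7))^5*((3*k+13)*(3*k+14)*(3*k+15))^4
      ≤ 5*(k+5)*(k+4)*(k+3)^5*(k+6)*((4*k+17)*(4*k+18)*(4*k+19)*(4*k+20))^4 :=
  Nat.le.intro (k := 1876392657801721958400000 + 12645351939368312294400000 * k + 39346398507699471490560000 * k ^ 2 + 75983770840246405788672000 * k ^ 3 + 102876149818564958123827200 * k ^ 4 + 104349504089535415715570688 * k ^ 5 + 82622989591285722770949120 * k ^ 6 + 52485270205003235974761984 * k ^ 7 + 27260822151741581625915648 * k ^ 8 + 11732784078001288683344448 * k ^ 9 + 4223374062475496016768064 * k ^ 10 + 1279358971999254150178304 * k ^ 11 + 327307402339608294976000 * k ^ 12 + 70812470656049790067072 * k ^ 13 + 12943760610037270200704 * k ^ 14 + 1992636732403178405632 * k ^ 15 + 256881230467014336000 *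 k ^ 16 + 27489782982537324096 * k ^ 17 + 2411237238469649472 * k ^ 18 + 170246372263277312 * k ^ 19 + 9425626227686656 * k ^ 20 + 393389207407616 * k ^ 21 + 11612438113280 * k ^ 22 + 215505768448 * k ^ 23 + 1883795456 * k ^ 24) (by ring)

lemma base4 : Lm 4 ≤ Rm 4 := by decide

lemma endpoint (m : ℕ) (hm : 4 ≤ m) : Lm m ≤ Rm m := by
  induction m, hm using Nat.le_induction with
  | base => exact base4
  | succ m hm ih =>
    obtain ⟨k, rfl⟩ : ∃ k, m = k + 4 := ⟨m - 4, by omega⟩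
    have hL : Lm (k+4+1) = Lm (k+4) *
        (9*(2*k+9)*(2*k+10)*((2*k+8)*(2*k+7))^5*((3*k+13)*(3*k+14)*(3*k+15))^4) := by
      simp only [Lm]
      rw [show 2*(k+4+1)-2 = (2*k+6)+2 from by omega, show 2*(k+4+1) = (2*k+6)+4 from by ring,
        show 3*(k+4+1) = (3*k+12)+3 from by ring, show 2*(k+4)-2 = 2*k+6 from by omega,
        show 2*(k+4) = (2*k+6)+2 from by ring, show 3*(k+4) = 3*k+12 from by ring,
        fs4 (2*k+6), fs2 (2*k+6), fs3 (3*k+12)]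
      ring
    have hR : Rm (k+4+1) = Rm (k+4) *
        (5*(k+5)*(k+4)*(k+3)^5*(k+6)*((4*k+17)*(4*k+18)*(4*k+19)*(4*k+20))^4) := by
      simp only [Rm]
      rw [show k+4+1 = k+5 from by ring, show k+5-1 = k+4 from by omega,
        show k+5-2 = k+3 from by omega, show k+5+1 = k+6 from by ring,
        show 4*(k+5) = (4*k+16)+4 from by ring, show k+4-1 = k+3 from by omega,
        show k+4-2 = k+2 from by omega, show 4*(k+4) = 4*k+16 from by ring,
        fs4 (4*k+16), fs6 k, fs5 k, fs4 k, fs3 k, fs2 k]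
      ring
    rw [hL, hR]
    exact Nat.mul_le_mul ih (step_poly k)


def gN (m s : ℕ) : ℕ := 9^s * (2*m)! * ((2*s-2)!)^5 * ((4*m-s)!)^4
def gD (m s : ℕ) : ℕ := 5^s * s ! * (s-1)! * ((s-2)!)^5 * (2*m-s+1)! * ((4*m)!)^4

lemma gN_pos (m s : ℕ) : 0 < gN m s := by
  unfold gN
  have := factorial_pos (2*m); have := factorial_pos (2*s-2); have := factorial_pos (4*m-s)
  positivity
lemma gD_pos (m s : ℕ) : 0 < gD m s := by
  unfold gD
  have := factorial_pos s; have := factorial_pos (s-1); have := factorial_pos (s-2)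
  have := factorial_pos (2*m-s+1); have := factorial_pos (4*m)
  positivity

lemma I1 (m s : ℕ) (hs : 2 ≤ s) (hsm : s + 1 ≤ m) :
    gN m (s+1) * (4*m-s)^4 = 9 * ((2*s)*(2*s-1))^5 * gN m s := by
  obtain ⟨k, rfl⟩ : ∃ k, s = k + 2 := ⟨s - 2, by omega⟩
  obtain ⟨e, rfl⟩ : ∃ e, m = k + 3 + e := ⟨m - (k+3), by omega⟩
  simp only [gN]
  rw [show 2*(k+2+1)-2 = (2*k+2)+2 from by omega, show 2*(k+2)-2 = 2*k+2 from by omega,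
    show 4*(k+3+e)-(k+2+1) = 3*k+9+4*e from by omega,
    show 4*(k+3+e)-(k+2) = (3*k+9+4*e)+1 from by omega,
    show 2*(k+2)-1 = 2*k+3 from by omega, show 2*(k+2) = 2*k+4 from by ring,
    fs2 (2*k+2), factorial_succ (3*k+9+4*e)]
  ring

lemma I2 (m s : ℕ) (hs : 2 ≤ s) (hsm : s + 1 ≤ m) :
    gD m (s+1) * (2*m-s+1) = 5 * ((s+1)*s*(s-1)^5) * gD m s := by
  obtain ⟨k, rfl⟩ : ∃ k, s = k + 2 := ⟨s - 2, by omega⟩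
  obtain ⟨e, rfl⟩ : ∃ e, m = k + 3 + e := ⟨m - (k+3), by omega⟩
  simp only [gD]
  rw [show k+2+1 = k+3 from by ring, show k+3-1 = (k+1)+1 from by omega,
    show k+3-2 = k+1 from by omega, show k+2-1 = k+1 from by omega,
    show k+2-2 = k from by omega,
    show 2*(k+3+e)-(k+3)+1 = k+4+2*e from by omega,
    show 2*(k+3+e)-(k+2)+1 = (k+4+2*e)+1 from by omega,
    fs3 k, fs2 k, factorial_succ (k+4+2*e), factorial_succ k]
  ring

/-- the rational sequence. -/
noncomputable def g (m s : ℕ) : ℚ := (gN m s : ℚ) / (gD m s : ℚ)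

noncomputable def r (m s : ℕ) : ℚ :=
  (9 * (((2*s)*(2*s-1) : ℕ) : ℚ)^5 * ((2*m-s+1 : ℕ) : ℚ)) /
  (5 * (((s+1)*s*(s-1)^5 : ℕ) : ℚ) * (((4*m-s : ℕ) : ℚ))^4)

lemma g_pos (m s : ℕ) : 0 < g m s := by
  have h1 := gN_pos m s; have h2 := gD_pos m s
  unfold g; positivity

lemma r_pos (m s : ℕ) (hs : 2 ≤ s) (hsm : s + 1 ≤ m) : 0 < r m s := by
  unfold r
  have h1 : 0 < (2*s)*(2*s-1) := by
    have : 1 ≤ 2*s-1 := by omega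
    positivity
  have h2 : 0 < (s+1)*s*(s-1)^5 := by
    have : 1 ≤ s - 1 := by omega
    positivity
  have h3 : 0 < 4*m-s := by omega
  have h4 : 0 < 2*m-s+1 := by omega
  positivity

lemma g_step (m s : ℕ) (hs : 2 ≤ s) (hsm : s + 1 ≤ m) :
    g m (s+1) = g m s * r m s := by
  have c1 : (gN m (s+1) : ℚ) * ((4*m-s : ℕ) : ℚ)^4 = 9 * (((2*s)*(2*s-1) : ℕ) : ℚ)^5 * gN m s := by
    exact_mod_cast congrArg (Nat.cast : ℕ → ℚ) (I1 m s hs hsm)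
  have c2 : (gD m (s+1) : ℚ) * ((2*m-s+1 : ℕ) : ℚ) = 5 * (((s+1)*s*(s-1)^5 : ℕ) : ℚ) * gD m s := by
    exact_mod_cast congrArg (Nat.cast : ℕ → ℚ) (I2 m s hs hsm)
  have hD1 : ((gD m (s+1) : ℚ)) ≠ 0 := by exact_mod_cast (gD_pos m (s+1)).ne'
  have hD : ((gD m s : ℚ)) ≠ 0 := by exact_mod_cast (gD_pos m s).ne'
  have h3 : ((4*m-s : ℕ) : ℚ) ≠ 0 := by
    have : 0 < 4*m-s := by omega
    exact_mod_cast this.ne'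
  have h4 : ((2*m-s+1 : ℕ) : ℚ) ≠ 0 := by
    have : (0:ℕ) < 2*m-s+1 := by omega
    exact_mod_cast this.ne'
  have h5 : (((s+1)*s*(s-1)^5 : ℕ) : ℚ) ≠ 0 := by
    have : 0 < (s+1)*s*(s-1)^5 := by
      have : 1 ≤ s - 1 := by omega
      positivity
    exact_mod_cast this.ne'
  set A : ℚ := (((2*s)*(2*s-1) : ℕ) : ℚ) with hA
  set B : ℚ := ((2*m-s+1 : ℕ) : ℚ) with hB
  set C : ℚ := (((s+1)*s*(s-1)^5 : ℕ) : ℚ) with hC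
  set D : ℚ := ((4*m-s : ℕ) : ℚ) with hD4
  have key : (gN m (s+1) : ℚ) * ((gD m s : ℚ) * (5 * C * D^4))
      = ((gN m s : ℚ) * (9 * A^5 * B)) * (gD m (s+1) : ℚ) := by
    linear_combination (5 * C * (gD m s : ℚ)) * c1 - (9 * A^5 * (gN m s : ℚ)) * c2
  have hX : (gD m s : ℚ) * (5 * C * D^4) ≠ 0 := by
    apply mul_ne_zero hD
    apply mul_ne_zero (mul_ne_zero (by norm_num) h5) (pow_ne_zero _ h3)
  have expand : g m s * r m s = ((gN m s : ℚ) * (9 * A^5 * B)) / ((gD m s : ℚ) * (5 * C * D^4)) := by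
    unfold g r
    rw [← hA, ← hB, ← hC, ← hD4]
    exact div_mul_div_comm _ _ _ _
  rw [expand]
  unfold g
  exact (div_eq_div_iff hD1 hX).mpr key


/-- s-part of ratio monotonicity. -/
lemma spart (s : ℕ) (hs : 2 ≤ s) :
    (2*s)^5*(2*s-1)^5*((s+2)*(s+1)*s^5) ≤ (2*s+2)^5*(2*s+1)^5*((s+1)*s*(s-1)^5) := by
  obtain ⟨k, rfl⟩ : ∃ k, s = k + 2 := ⟨s - 2, by omega⟩
  rw [show 2*(k+2)-1 = 2*k+3 from by omega, show (k+2)-1 = k+1 from by omega]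
  set X : ℕ := (k+2)^2*(2*k+3) with hX
  set Y : ℕ := (k+3)*(2*k+5)*(k+1) with hY
  set d : ℕ := 2*k^2+6*k+3 with hd
  have hXY : Y = X + d := by rw [hX, hY, hd]; ring
  have h5 : 2*X ≤ 5*(k+2)*d := by rw [hX, hd]; nlinarith [sq_nonneg k, k.zero_le]
  have hpow : (k+2)*X^5 + 5*(k+2)*X^4*d ≤ (k+2)*Y^5 := by
    rw [hXY]
    exact Nat.le.intro (k := (k+2)*(10*X^3*d^2+10*X^2*d^3+5*X*d^4+d^5)) (by ring)
  have hmain : (k+2+2)*X^5 ≤ (k+2)*Y^5 := by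
    have h2 : 2*X^5 ≤ 5*(k+2)*X^4*d := by
      calc 2*X^5 = (2*X)*X^4 := by ring
        _ ≤ (5*(k+2)*d)*X^4 := Nat.mul_le_mul_right _ h5
        _ = 5*(k+2)*X^4*d := by ring
    calc (k+2+2)*X^5 = (k+2)*X^5 + 2*X^5 := by ring
      _ ≤ (k+2)*X^5 + 5*(k+2)*X^4*d := by omega
      _ ≤ (k+2)*Y^5 := hpow
  calc (2*(k+2))^5*(2*k+3)^5*((k+2+2)*(k+2+1)*(k+2)^5)
      = 32*(k+2+1)*((k+2+2)*X^5) := by rw [hX]; ring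
    _ ≤ 32*(k+2+1)*((k+2)*Y^5) := Nat.mul_le_mul_left _ hmain
    _ = (2*(k+2)+2)^5*(2*(k+2)+1)^5*((k+2+1)*(k+2)*(k+1)^5) := by rw [hY]; ring

/-- m-part of ratio monotonicity. -/
lemma mpart (m s : ℕ) (hs : 2 ≤ s) (hsm : s + 2 ≤ m) :
    (2*m-s+1)*(4*m-s-1)^4 ≤ (2*m-s)*(4*m-s)^4 := by
  set y : ℕ := 2*m-s with hy
  set x : ℕ := 4*m-s-1 with hx
  have hxy : x ≤ 4*y := by omega
  have h1 : 4*m-s = x+1 := by omega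
  rw [h1]
  have hexp : x^4+4*x^3 ≤ (x+1)^4 := Nat.le.intro (k := 6*x^2+4*x+1) (by ring)
  calc (y+1)*x^4 = y*x^4 + x^3*x := by ring
    _ ≤ y*x^4 + x^3*(4*y) := by
        have := Nat.mul_le_mul_left (x^3) hxy
        omega
    _ = y*(x^4+4*x^3) := by ring
    _ ≤ y*(x+1)^4 := Nat.mul_le_mul_left _ hexp

lemma r_mono_succ (m s : ℕ) (hs : 2 ≤ s) (hsm : s + 2 ≤ m) : r m s ≤ r m (s+1) := by
  have e1 : 2*m-(s+1)+1 = 2*m-s := by omega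
  have e2 : 4*m-(s+1) = 4*m-s-1 := by omega
  have e3 : (s+1)-1 = s := by omega
  have e4 : 2*(s+1)-1 = 2*s+1 := by omega
  have e5 : 2*(s+1) = 2*s+2 := by ring
  unfold r
  rw [e1, e2, e3, e4, e5]
  have hd1 : (0:ℚ) < 5 * (((s+1)*s*(s-1)^5 : ℕ) : ℚ) * (((4*m-s : ℕ) : ℚ))^4 := by
    have h2 : 0 < (s+1)*s*(s-1)^5 := by
      have : 1 ≤ s - 1 := by omega
      positivity
    have h3 : 0 < 4*m-s := by omega
    have c2 : (0:ℚ) < (((s+1)*s*(s-1)^5 : ℕ) : ℚ) := by exact_mod_cast h2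
    have c3 : (0:ℚ) < ((4*m-s : ℕ) : ℚ) := by exact_mod_cast h3
    positivity
  have hd2 : (0:ℚ) < 5 * (((s+1+1)*(s+1)*s^5 : ℕ) : ℚ) * (((4*m-s-1 : ℕ) : ℚ))^4 := by
    have h2 : 0 < (s+1+1)*(s+1)*s^5 := by positivity
    have h3 : 0 < 4*m-s-1 := by omega
    have c2 : (0:ℚ) < (((s+1+1)*(s+1)*s^5 : ℕ) : ℚ) := by exact_mod_cast h2
    have c3 : (0:ℚ) < ((4*m-s-1 : ℕ) : ℚ) := by exact_mod_cast h3
    positivity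
  rw [div_le_div_iff₀ hd1 hd2]
  have hnat : (9 * ((2*s)*(2*s-1))^5 * (2*m-s+1)) * (5 * ((s+1+1)*(s+1)*s^5) * (4*m-s-1)^4)
      ≤ (9 * ((2*s+2)*(2*s+1))^5 * (2*m-s)) * (5 * ((s+1)*s*(s-1)^5) * (4*m-s)^4) := by
    have ha := spart s hs
    have hb := mpart m s hs hsm
    calc (9 * ((2*s)*(2*s-1))^5 * (2*m-s+1)) * (5 * ((s+1+1)*(s+1)*s^5) * (4*m-s-1)^4)
        = 45 * ((2*s)^5*(2*s-1)^5*((s+2)*(s+1)*s^5)) * ((2*m-s+1)*(4*m-s-1)^4) := by ring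
      _ ≤ 45 * ((2*s+2)^5*(2*s+1)^5*((s+1)*s*(s-1)^5)) * ((2*m-s)*(4*m-s)^4) :=
          Nat.mul_le_mul (Nat.mul_le_mul_left _ ha) hb
      _ = (9 * ((2*s+2)*(2*s+1))^5 * (2*m-s)) * (5 * ((s+1)*s*(s-1)^5) * (4*m-s)^4) := by ring
  calc 9 * (((2*s)*(2*s-1) : ℕ) : ℚ)^5 * ((2*m-s+1 : ℕ) : ℚ) * (5 * (((s+1+1)*(s+1)*s^5 : ℕ) : ℚ) * (((4*m-s-1 : ℕ) : ℚ))^4)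
      = (((9 * ((2*s)*(2*s-1))^5 * (2*m-s+1)) * (5 * ((s+1+1)*(s+1)*s^5) * (4*m-s-1)^4) : ℕ) : ℚ) := by push_cast; ring
    _ ≤ (((9 * ((2*s+2)*(2*s+1))^5 * (2*m-s)) * (5 * ((s+1)*s*(s-1)^5) * (4*m-s)^4) : ℕ) : ℚ) := by exact_mod_cast hnat
    _ = 9 * (((2*s+2)*(2*s+1) : ℕ) : ℚ)^5 * ((2*m-s : ℕ) : ℚ) * (5 * (((s+1)*s*(s-1)^5 : ℕ) : ℚ) * (((4*m-s : ℕ) : ℚ))^4) := by push_cast; ring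


-- appended to part1
lemma g2_nat (m : ℕ) (hm : 4 ≤ m) : gN m 2 ≤ gD m 2 := by
  obtain ⟨w, rfl⟩ : ∃ w, m = w + 4 := ⟨m - 4, by omega⟩
  simp only [gN, gD]
  rw [show 2*2-2 = 2 from by norm_num, show (2:ℕ)-1 = 1 from rfl, show (2:ℕ)-2 = 0 from rfl,
    show 2*(w+4)-2+1 = (2*w+7) from by omega, show 2*(w+4) = (2*w+7)+1 from by omega,
    show 4*(w+4)-2 = 4*w+14 from by omega, show 4*(w+4) = (4*w+14)+2 from by omega,
    factorial_succ (2*w+7), fs2 (4*w+14)]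
  have hpoly : 9^2*((2*w+7+1))*(2!)^5 ≤ 5^2 * 2! * 1! * (0!)^5 * (((4*w+14)+2)*(((4*w+14)+1)))^4 := by
    have h1 : 240 + w ≤ (4*w+14+2)*(4*w+14+1) := by nlinarith [sq_nonneg w]
    have h2 : (240+w)^4 ≤ ((4*w+14+2)*(4*w+14+1))^4 := Nat.pow_le_pow_left h1 4
    have h3 : 240^3*(240+w) ≤ (240+w)^4 := by
      calc 240^3*(240+w) ≤ (240+w)^3*(240+w) :=
            Nat.mul_le_mul_right _ (Nat.pow_le_pow_left (by omega) 3)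
        _ = (240+w)^4 := by ring
    simp [Nat.factorial]
    nlinarith [h2, h3]
  calc 9^2 * ((2*w+7+1) * (2*w+7)!) * (2!)^5 * ((4*w+14)!)^4
      = (9^2*((2*w+7+1))*(2!)^5) * ((2*w+7)! * ((4*w+14)!)^4) := by ring
    _ ≤ (5^2 * 2! * 1! * (0!)^5 * (((4*w+14)+2)*(((4*w+14)+1)))^4) * ((2*w+7)! * ((4*w+14)!)^4) :=
        Nat.mul_le_mul_right _ hpoly
    _ = 5^2 * 2! * 1! * (0!)^5 * (2*w+7)! * ((4*w+14+2) * ((4*w+14+1) * (4*w+14)!))^4 := by ring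

lemma gN_eq_Lm (m : ℕ) : gN m m = Lm m := by
  unfold gN Lm; rw [show 4*m-m = 3*m from by omega]
lemma gD_eq_Rm (m : ℕ) : gD m m = Rm m := by
  unfold gD Rm; rw [show 2*m-m+1 = m+1 from by omega]

lemma g_le_one (m s : ℕ) (h : gN m s ≤ gD m s) : g m s ≤ 1 := by
  unfold g
  rw [div_le_one (by exact_mod_cast gD_pos m s)]
  exact_mod_cast h

lemma g_le_one_rev (m s : ℕ) (h : g m s ≤ 1) : gN m s ≤ gD m s := by
  unfold g at h
  rw [div_le_one (by exact_mod_cast gD_pos m s)] at h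
  exact_mod_cast h

lemma r_mono (m i j : ℕ) (h2 : 2 ≤ i) (hij : i ≤ j) (hjm : j + 1 ≤ m) : r m i ≤ r m j := by
  induction j, hij using Nat.le_induction with
  | base => exact le_refl _
  | succ j hj ih =>
    calc r m i ≤ r m j := ih (by omega)
      _ ≤ r m (j+1) := r_mono_succ m j (by omega) (by omega)

lemma g_down (m s u : ℕ) (hs : 2 ≤ s) (hsu : s ≤ u) (hum : u ≤ m)
    (h : ∀ i, s ≤ i → i + 1 ≤ u → 1 ≤ r m i) : g m s ≤ g m u := by
  induction u, hsu using Nat.le_induction with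
  | base => exact le_refl _
  | succ u hu ih =>
    calc g m s ≤ g m u := ih (by omega) (fun i hi hi2 => h i hi (by omega))
      _ ≤ g m u * r m u := le_mul_of_one_le_right (g_pos m u).le (h u hu (by omega))
      _ = g m (u+1) := (g_step m u (by omega) (by omega)).symm

lemma g_up (m s : ℕ) (hs : 2 ≤ s) (hsm : s ≤ m)
    (h : ∀ i, 2 ≤ i → i + 1 ≤ s → r m i ≤ 1) : g m s ≤ g m 2 := by
  induction s, hs using Nat.le_induction with
  | base => exact le_refl _
  | succ s hs ih =>
    calc g m (s+1) = g m s * r m s := g_step m s hs (by omega)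
      _ ≤ g m s * 1 := by
          have := h s hs (by omega)
          have hp := (g_pos m s).le
          exact mul_le_mul_of_nonneg_left this hp
      _ = g m s := by ring
      _ ≤ g m 2 := ih (by omega) (fun i hi hi2 => h i hi (by omega))

lemma key_nat (m s : ℕ) (hm : 4 ≤ m) (hs : 2 ≤ s) (hsm : s ≤ m) : gN m s ≤ gD m s := by
  apply g_le_one_rev
  by_cases hex : ∃ j, s ≤ j ∧ j + 1 ≤ m ∧ r m j < 1
  · obtain ⟨j, hj1, hj2, hj3⟩ := hex
    calc g m s ≤ g m 2 := by
          apply g_up m s hs hsm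
          intro i hi hi2
          calc r m i ≤ r m j := r_mono m i j hi (by omega) hj2
            _ ≤ 1 := hj3.le
      _ ≤ 1 := g_le_one m 2 (g2_nat m hm)
  · push_neg at hex
    calc g m s ≤ g m m := by
          apply g_down m s m hs hsm (le_refl m)
          intro i hi hi2
          exact hex i hi hi2
      _ ≤ 1 := by
          apply g_le_one
          rw [gN_eq_Lm, gD_eq_Rm]
          exact endpoint m hm

/-- The union-bound term for set-size `s`. -/
def term (m s : ℕ) : ℕ :=
  (4*m).choose s * (2*m).choose (s-1) * ((2*s-2).descFactorial s * (4*m - s)!)^5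

lemma term_le (m s : ℕ) (hm : 4 ≤ m) (hs : 2 ≤ s) (hsm : s ≤ m) :
    9^s * term m s ≤ 5^s * ((4*m)!)^5 := by
  set X : ℕ := s ! * (s-1)! * ((s-2)!)^5 * (2*m-s+1)! * (4*m-s)! with hX
  have hXpos : 0 < X := by
    rw [hX]
    have := factorial_pos s; have := factorial_pos (s-1); have := factorial_pos (s-2)
    have := factorial_pos (2*m-s+1); have := factorial_pos (4*m-s)
    positivity
  apply Nat.le_of_mul_le_mul_right _ hXpos
  have h1 : (4*m).choose s * s ! * (4*m-s)! = (4*m)! :=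
    Nat.choose_mul_factorial_mul_factorial (by omega)
  have h2 : (2*m).choose (s-1) * (s-1)! * (2*m-s+1)! = (2*m)! := by
    have := Nat.choose_mul_factorial_mul_factorial (show s-1 ≤ 2*m by omega)
    rwa [show 2*m-(s-1) = 2*m-s+1 from by omega] at this
  have h3 : (s-2)! * (2*s-2).descFactorial s = (2*s-2)! := by
    have := Nat.factorial_mul_descFactorial (show s ≤ 2*s-2 by omega)
    rwa [show 2*s-2-s = s-2 from by omega] at this
  have hA : 9^s * term m s * X = gN m s * ((4*m)! * (4*m-s)!) := by
    calc 9^s * term m s * X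
        = ((4*m).choose s * s ! * (4*m-s)!) * (((2*m).choose (s-1) * (s-1)! * (2*m-s+1)!))
            * (((s-2)! * (2*s-2).descFactorial s))^5 * (9^s * ((4*m-s)!)^5) := by
          unfold term; rw [hX]; ring
      _ = gN m s * ((4*m)! * (4*m-s)!) := by rw [h1, h2, h3]; unfold gN; ring
  have hB : 5^s * ((4*m)!)^5 * X = gD m s * ((4*m)! * (4*m-s)!) := by
    unfold gD; rw [hX]; ring
  rw [hA, hB]
  exact Nat.mul_le_mul_right _ (key_nat m s hm hs hsm)

lemma geo_sum (m : ℕ) (hm : 2 ≤ m) :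
    (Finset.Icc 2 m).sum (fun s => (5/9 : ℚ)^s) ≤ 25/36 - (5/4)*(5/9)^m := by
  induction m, hm using Nat.le_induction with
  | base => norm_num
  | succ m hm ih =>
    rw [show Finset.Icc 2 (m+1) = insert (m+1) (Finset.Icc 2 m) from
      (Finset.insert_Icc_right_eq_Icc_add_one (by omega)).symm]
    rw [Finset.sum_insert (by simp)]
    have hp : (0:ℚ) < (5/9 : ℚ)^m := by positivity
    have : (5/9 : ℚ)^(m+1) = (5/9)^m * (5/9) := by ring
    nlinarith [ih]

lemma total_lt (m : ℕ) (hm : 4 ≤ m) :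
    (Finset.Icc 2 m).sum (fun s => (term m s : ℚ)) < ((4*m)! : ℚ)^5 := by
  have hF : (0:ℚ) < ((4*m)! : ℚ)^5 := by
    have := factorial_pos (4*m)
    have : (0:ℚ) < ((4*m)! : ℚ) := by exact_mod_cast this
    positivity
  have hterm : ∀ s ∈ Finset.Icc 2 m, (term m s : ℚ) ≤ (5/9)^s * ((4*m)! : ℚ)^5 := by
    intro s hs
    rw [Finset.mem_Icc] at hs
    have h := term_le m s hm hs.1 hs.2
    have hc : ((9:ℚ))^s * (term m s : ℚ) ≤ (5:ℚ)^s * ((4*m)! : ℚ)^5 := by exact_mod_cast h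
    have h9 : (0:ℚ) < (9:ℚ)^s := by positivity
    rw [div_pow, div_mul_eq_mul_div, le_div_iff₀ h9]
    calc (term m s : ℚ) * 9^s = 9^s * term m s := by ring
      _ ≤ 5^s * ((4*m)! : ℚ)^5 := hc
      _ = (5:ℚ)^s * ((4*m)! : ℚ)^5 := by ring
  calc (Finset.Icc 2 m).sum (fun s => (term m s : ℚ))
      ≤ (Finset.Icc 2 m).sum (fun s => (5/9 : ℚ)^s * ((4*m)! : ℚ)^5) := Finset.sum_le_sum hterm
    _ = ((Finset.Icc 2 m).sum (fun s => (5/9 : ℚ)^s)) * ((4*m)! : ℚ)^5 := by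
        rw [Finset.sum_mul]
    _ ≤ (25/36 - (5/4)*(5/9)^m) * ((4*m)! : ℚ)^5 := by
        apply mul_le_mul_of_nonneg_right (geo_sum m (by omega)) hF.le
    _ < ((4*m)! : ℚ)^5 := by
        have hp : (0:ℚ) < (5/9 : ℚ)^m := by positivity
        nlinarith [hF, hp]


lemma count_perm_le (n : ℕ) (S U : Finset (Fin n)) :
    ((univ : Finset (Equiv.Perm (Fin n))).filter (fun π => ∀ a ∈ S, π a ∈ U)).card
      ≤ U.card.descFactorial S.card * (n - S.card)! := by
  classical
  set A := (univ : Finset (Equiv.Perm (Fin n))).filter (fun π => ∀ a ∈ S, π a ∈ U) with hA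
  set B := (univ : Finset (↥S → Fin n)).filter
      (fun g => Function.Injective g ∧ ∀ a, g a ∈ U) with hB
  have hmap : ∀ π ∈ A, (fun a : ↥S => π ↑a) ∈ B := by
    intro π hπ
    rw [hA, mem_filter] at hπ
    rw [hB, mem_filter]
    exact ⟨mem_univ _, fun a b hab => Subtype.ext (π.injective hab), fun a => hπ.2 a a.2⟩
  rw [Finset.card_eq_sum_card_fiberwise hmap]
  have hfiber : ∀ g ∈ B, (A.filter (fun π => (fun a : ↥S => π ↑a) = g)).card ≤ (n - S.card)! := by
    intro g hg
    rw [hB, mem_filter] at hg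
    obtain ⟨-, ginj, gmem⟩ := hg
    set V := Finset.image (fun a : ↥S => g a) univ with hV
    have hVcard : V.card = S.card := by
      rw [hV, Finset.card_image_of_injective _ ginj, Finset.card_univ, Fintype.card_coe]
    have hVc : (Vᶜ : Finset (Fin n)).card = n - S.card := by
      rw [Finset.card_compl, hVcard, Fintype.card_fin]
    have hcard2 : Fintype.card (↥(Sᶜ : Finset (Fin n)) ↪ ↥(Vᶜ : Finset (Fin n)))
        = (n - S.card)! := by
      rw [Fintype.card_embedding_eq, Fintype.card_coe, Fintype.card_coe, hVc,
        Finset.card_compl, Fintype.card_fin, Nat.descFactorial_self]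
    set F := A.filter (fun π => (fun a : ↥S => π ↑a) = g) with hF
    have key : ∀ π ∈ F, ∀ x : Fin n, x ∉ S → π x ∈ (Vᶜ : Finset (Fin n)) := by
      intro π hπ x hx
      rw [hF, mem_filter] at hπ
      rw [Finset.mem_compl]
      intro hmem
      rw [hV] at hmem
      obtain ⟨a, -, ha⟩ := Finset.mem_image.mp hmem
      rw [← hπ.2] at ha
      exact hx ((π.injective ha) ▸ a.2)
    have := Fintype.card_le_of_injective
      (fun (x : ↥F) => (⟨fun y : ↥(Sᶜ : Finset (Fin n)) =>
          (⟨x.1 ↑y, key x.1 x.2 y (Finset.mem_compl.mp y.2)⟩ : ↥(Vᶜ : Finset (Fin n))),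
        fun y1 y2 h12 => Subtype.ext (x.1.injective (by
          simpa using congrArg Subtype.val h12))⟩ : ↥(Sᶜ : Finset (Fin n)) ↪ ↥(Vᶜ : Finset (Fin n))))
      (by
        intro x1 x2 h12
        apply Subtype.ext
        apply Equiv.coe_fn_injective
        funext z
        by_cases hz : z ∈ S
        · have e1 := congrFun (Finset.mem_filter.mp x1.2).2 ⟨z, hz⟩
          have e2 := congrFun (Finset.mem_filter.mp x2.2).2 ⟨z, hz⟩
          simp only at e1 e2
          show ((x1 : Equiv.Perm (Fin n))) z = ((x2 : Equiv.Perm (Fin n))) z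
          rw [e1, e2]
        · have := congrArg (fun (e : ↥(Sᶜ : Finset (Fin n)) ↪ ↥(Vᶜ : Finset (Fin n))) =>
            (e ⟨z, Finset.mem_compl.mpr hz⟩ : Fin n)) h12
          exact this)
    rw [hcard2, Fintype.card_coe] at this
    exact this
  calc ∑ g ∈ B, (A.filter (fun π => (fun a : ↥S => π ↑a) = g)).card
      ≤ ∑ _g ∈ B, (n - S.card)! := Finset.sum_le_sum hfiber
    _ = B.card * (n - S.card)! := by rw [Finset.sum_const, smul_eq_mul]
    _ ≤ U.card.descFactorial S.card * (n - S.card)! := by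
        apply Nat.mul_le_mul_right
        have hBle := Fintype.card_le_of_injective
          (fun (x : ↥B) => (⟨fun a => ⟨x.1 a, (Finset.mem_filter.mp x.2).2.2 a⟩,
            fun a1 a2 h12 => (Finset.mem_filter.mp x.2).2.1 (by
              simpa using congrArg Subtype.val h12)⟩ : ↥S ↪ ↥U))
          (by
            intro x1 x2 h12
            apply Subtype.ext
            funext a
            have := congrArg (fun (e : ↥S ↪ ↥U) => (e a : Fin n)) h12
            exact this)
        rw [Fintype.card_embedding_eq, Fintype.card_coe, Fintype.card_coe, Fintype.card_coe]
          at hBle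
        exact hBle


def q (m : ℕ) (x : Fin (4*m)) : Fin (2*m) := ⟨x.val / 2, by have := x.isLt; omega⟩

lemma card_preimage (m : ℕ) (T : Finset (Fin (2*m))) :
    ((univ : Finset (Fin (4*m))).filter (fun x => q m x ∈ T)).card = 2 * T.card := by
  classical
  have hsplit : (univ : Finset (Fin (4*m))).filter (fun x => q m x ∈ T)
      = T.biUnion (fun y => (univ : Finset (Fin (4*m))).filter (fun x => q m x = y)) := by
    ext x
    simp only [mem_filter, mem_biUnion, mem_univ, true_and]
    exact ⟨fun h => ⟨q m x, h, rfl⟩, fun ⟨y, hy, hx⟩ => hx ▸ hy⟩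
  have hdisj : ∀ y1 ∈ T, ∀ y2 ∈ T, y1 ≠ y2 → Disjoint
      ((univ : Finset (Fin (4*m))).filter (fun x => q m x = y1))
      ((univ : Finset (Fin (4*m))).filter (fun x => q m x = y2)) := by
    intro y1 h1 y2 h2 hne
    simp only [Finset.disjoint_left, mem_filter]
    rintro x ⟨-, hx1⟩ ⟨-, hx2⟩
    exact hne (hx1 ▸ hx2 ▸ rfl)
  have hfib : ∀ y ∈ T, ((univ : Finset (Fin (4*m))).filter (fun x => q m x = y)).card = 2 := by
    intro y hy
    have : (univ : Finset (Fin (4*m))).filter (fun x => q m x = y)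
        = {⟨2*y.val, by have := y.isLt; omega⟩, ⟨2*y.val+1, by have := y.isLt; omega⟩} := by
      ext x
      simp only [mem_filter, mem_univ, true_and, mem_insert, mem_singleton, Fin.ext_iff, q]
      have := x.isLt; have := y.isLt
      omega
    rw [this, Finset.card_insert_of_notMem (by simp [Fin.ext_iff]), Finset.card_singleton]
  rw [hsplit, Finset.card_biUnion hdisj, Finset.sum_congr rfl hfib, Finset.sum_const,
    smul_eq_mul, Nat.mul_comm]

def nbr (m : ℕ) (F : Fin 5 → Equiv.Perm (Fin (4*m))) (a : Fin (4*m)) : Finset (Fin (2*m)) :=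
  (univ : Finset (Fin 5)).image (fun j => q m (F j a))

def Ebad (m : ℕ) (S : Finset (Fin (4*m))) (T : Finset (Fin (2*m))) :
    Finset (Fin 5 → Equiv.Perm (Fin (4*m))) :=
  univ.filter (fun F => ∀ j, ∀ a ∈ S, q m (F j a) ∈ T)

lemma card_Ebad_le (m : ℕ) (S : Finset (Fin (4*m))) (T : Finset (Fin (2*m))) :
    (Ebad m S T).card ≤ ((2*T.card).descFactorial S.card * (4*m - S.card)!)^5 := by
  classical
  set U := (univ : Finset (Fin (4*m))).filter (fun x => q m x ∈ T) with hU
  set Aset := (univ : Finset (Equiv.Perm (Fin (4*m)))).filter (fun π => ∀ a ∈ S, π a ∈ U) with hAs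
  have hE : Ebad m S T = Fintype.piFinset (fun _ : Fin 5 => Aset) := by
    ext F
    simp only [Ebad, mem_filter, mem_univ, true_and, Fintype.mem_piFinset, hAs, hU]
  rw [hE, Fintype.card_piFinset]
  rw [Finset.prod_const, Finset.card_univ, Fintype.card_fin]
  have hle : Aset.card ≤ (2*T.card).descFactorial S.card * (4*m - S.card)! := by
    have := count_perm_le (4*m) S U
    rwa [show U.card = 2*T.card from card_preimage m T] at this
  exact Nat.pow_le_pow_left hle 5

lemma bad_subset (m : ℕ) (hm : 4 ≤ m) :
    (univ : Finset (Fin 5 → Equiv.Perm (Fin (4*m)))).filter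
        (fun F => ∃ S : Finset (Fin (4*m)), S.card ≤ m ∧ (S.biUnion (nbr m F)).card < S.card)
      ⊆ (Finset.Icc 2 m).biUnion (fun s =>
          ((powersetCard s (univ : Finset (Fin (4*m)))) ×ˢ
            (powersetCard (s-1) (univ : Finset (Fin (2*m))))).biUnion
          (fun p => Ebad m p.1 p.2)) := by
  classical
  intro F hF
  rw [mem_filter] at hF
  obtain ⟨-, S, hSm, hlt⟩ := hF
  have hs2 : 2 ≤ S.card := by
    by_contra h
    push_neg at h
    interval_cases hc : S.card
    · omega
    · obtain ⟨a, ha⟩ := Finset.card_eq_one.mp hc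
      have hne : (S.biUnion (nbr m F)).Nonempty := by
        refine ⟨q m (F 0 a), ?_⟩
        rw [Finset.mem_biUnion]
        exact ⟨a, by rw [ha]; exact mem_singleton_self a,
          Finset.mem_image.mpr ⟨0, mem_univ _, rfl⟩⟩
      have := Finset.card_pos.mpr hne
      omega
  set N := S.biUnion (nbr m F) with hN
  obtain ⟨T, hNT, -, hTcard⟩ := Finset.exists_subsuperset_card_eq (N.subset_univ)
    (show N.card ≤ S.card - 1 by omega)
    (by rw [Finset.card_univ, Fintype.card_fin]; omega)
  rw [Finset.mem_biUnion]
  refine ⟨S.card, Finset.mem_Icc.mpr ⟨hs2, hSm⟩, ?_⟩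
  rw [Finset.mem_biUnion]
  refine ⟨(S, T), Finset.mem_product.mpr ⟨Finset.mem_powersetCard.mpr ⟨S.subset_univ, rfl⟩,
    Finset.mem_powersetCard.mpr ⟨T.subset_univ, hTcard⟩⟩, ?_⟩
  rw [Ebad, mem_filter]
  refine ⟨mem_univ _, fun j a ha => ?_⟩
  apply hNT
  rw [hN, Finset.mem_biUnion]
  exact ⟨a, ha, Finset.mem_image.mpr ⟨j, mem_univ _, rfl⟩⟩

lemma bad_card_le (m : ℕ) (hm : 4 ≤ m) :
    ((univ : Finset (Fin 5 → Equiv.Perm (Fin (4*m)))).filter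
        (fun F => ∃ S : Finset (Fin (4*m)), S.card ≤ m ∧ (S.biUnion (nbr m F)).card < S.card)).card
      ≤ (Finset.Icc 2 m).sum (fun s => term m s) := by
  classical
  calc _ ≤ ((Finset.Icc 2 m).biUnion (fun s =>
          ((powersetCard s (univ : Finset (Fin (4*m)))) ×ˢ
            (powersetCard (s-1) (univ : Finset (Fin (2*m))))).biUnion
          (fun p => Ebad m p.1 p.2))).card := Finset.card_le_card (bad_subset m hm)
    _ ≤ (Finset.Icc 2 m).sum (fun s =>
          (((powersetCard s (univ : Finset (Fin (4*m)))) ×ˢ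
            (powersetCard (s-1) (univ : Finset (Fin (2*m))))).biUnion
          (fun p => Ebad m p.1 p.2)).card) := Finset.card_biUnion_le
    _ ≤ (Finset.Icc 2 m).sum (fun s => term m s) := by
        apply Finset.sum_le_sum
        intro s hs
        calc _ ≤ ∑ p ∈ (powersetCard s (univ : Finset (Fin (4*m)))) ×ˢ
                  (powersetCard (s-1) (univ : Finset (Fin (2*m)))), (Ebad m p.1 p.2).card :=
              Finset.card_biUnion_le
          _ ≤ ∑ _p ∈ (powersetCard s (univ : Finset (Fin (4*m)))) ×ˢ
                  (powersetCard (s-1) (univ : Finset (Fin (2*m)))),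
                  ((2*s-2).descFactorial s * (4*m - s)!)^5 := by
              apply Finset.sum_le_sum
              intro p hp
              rw [Finset.mem_product] at hp
              have h1 := (Finset.mem_powersetCard.mp hp.1).2
              have h2 := (Finset.mem_powersetCard.mp hp.2).2
              have := card_Ebad_le m p.1 p.2
              rw [h1, h2, show 2*(s-1) = 2*s-2 from by omega] at this
              exact this
          _ = term m s := by
              rw [Finset.sum_const, smul_eq_mul, Finset.card_product,
                Finset.card_powersetCard, Finset.card_powersetCard,
                Finset.card_univ, Finset.card_univ, Fintype.card_fin, Fintype.card_fin]
              unfold term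
              ring

theorem main : ∃ m₀ : ℕ, 0 < m₀ ∧ ∀ m : ℕ, m₀ ≤ m →
    ∃ nbrf : Fin (4 * m) → Finset (Fin (2 * m)),
      (∀ a : Fin (4 * m), (nbrf a).card ≤ 5) ∧
      ∀ S : Finset (Fin (4 * m)), S.card ≤ m → S.card ≤ (S.biUnion nbrf).card := by
  classical
  refine ⟨4, by norm_num, fun m hm => ?_⟩
  set Bad := (univ : Finset (Fin 5 → Equiv.Perm (Fin (4*m)))).filter
      (fun F => ∃ S : Finset (Fin (4*m)), S.card ≤ m ∧ (S.biUnion (nbr m F)).card < S.card)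
    with hBad
  have hcard : (univ : Finset (Fin 5 → Equiv.Perm (Fin (4*m)))).card = ((4*m)!)^5 := by
    rw [Finset.card_univ]
    rw [Fintype.card_fun, Fintype.card_perm, Fintype.card_fin, Fintype.card_fin]
  have hlt : Bad.card < (univ : Finset (Fin 5 → Equiv.Perm (Fin (4*m)))).card := by
    rw [hcard]
    have h1 : (Bad.card : ℚ) ≤ (Finset.Icc 2 m).sum (fun s => (term m s : ℚ)) := by
      have := bad_card_le m hm
      have hc : ((Bad.card : ℕ) : ℚ) ≤ (((Finset.Icc 2 m).sum (fun s => term m s) : ℕ) : ℚ) := by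
        exact_mod_cast this
      rw [Nat.cast_sum] at hc
      exact hc
    have h2 := total_lt m hm
    have : (Bad.card : ℚ) < (((4*m)! : ℕ) : ℚ)^5 := lt_of_le_of_lt h1 h2
    exact_mod_cast this
  have hex : ∃ F, F ∉ Bad := by
    by_contra h
    push_neg at h
    have : (univ : Finset (Fin 5 → Equiv.Perm (Fin (4*m)))) ⊆ Bad := fun F _ => h F
    have := Finset.card_le_card this
    omega
  obtain ⟨F, hF⟩ := hex
  refine ⟨nbr m F, fun a => ?_, fun S hS => ?_⟩
  · calc (nbr m F a).card ≤ (univ : Finset (Fin 5)).card := Finset.card_image_le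
      _ = 5 := by rw [Finset.card_univ, Fintype.card_fin]
  · by_contra h
    push_neg at h
    exact hF (Finset.mem_filter.mpr ⟨mem_univ _, S, hS, h⟩)


end QFH

open Finset

/-- Existence of (1/4, 5, 1/2)-expanders: for all sufficiently large `m` there is a
bipartite graph between a left side of size `4m` and a right side of size `2m`, given by
a neighborhood map `nbr`, in which every left vertex has at most 5 neighbors and every
set `S` of at most `m` left vertices has at least `|S|` distinct neighbors. -/
theorem exists_quarter_five_half_expanders :
    ∃ m₀ : ℕ, 0 < m₀ ∧ ∀ m : ℕ, m₀ ≤ m →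
      ∃ nbr : Fin (4 * m) → Finset (Fin (2 * m)),
        (∀ a : Fin (4 * m), (nbr a).card ≤ 5) ∧
        ∀ S : Finset (Fin (4 * m)), S.card ≤ m → S.card ≤ (S.biUnion nbr).card := by
  exact QFH.main
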